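/- The exponential generating function G(z) = Σ_{n≥0} b_n z^n / n! satisfies the q-th order differential equation (1-z) G^{(q)}(z) - q G^{(q-1)}(z) - (q-1) G(z) = q w^{(q)}(z), where w(z) = Σ_{i≥1} (-1)^i z^{qi}/(qi)!, with initial conditions G^{(i)}(0) = i! for i = 0,1,...,q-1. -/

import Mathlib

open Finset

/-- `a` with `a+1`, ..., `a+q-1` (0-indexed) form an adjacent `q`-cycle of `π`. -/
def isAdjCycle (q : ℕ) {n : ℕ} (π : Equiv.Perm (Fin n)) (a : ℕ) : Prop :=
  a + q ≤ n ∧ ∀ i : Fin n, a ≤ i.val → i.val < a + q →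
    (π i).val = if i.val = a + q - 1 then a else i.val + 1

instance (q n : ℕ) (π : Equiv.Perm (Fin n)) (a : ℕ) : Decidable (isAdjCycle q π a) := by
  unfold isAdjCycle; infer_instance

/-- The number of adjacent `q`-cycles of a permutation of `{1,...,n}`. -/
def adjCycleCount (q : ℕ) {n : ℕ} (π : Equiv.Perm (Fin n)) : ℕ :=
  ((Finset.range n).filter (isAdjCycle q π)).card

/-- `numAqC q n k` = number of permutations of `{1,...,n}` with exactly `k` adjacent `q`-cycles. -/
def numAqC (q n k : ℕ) : ℕ :=
  (Finset.univ.filter (fun π : Equiv.Perm (Fin n) => adjCycleCount q π = k)).card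

def b (q n : ℕ) : ℕ := numAqC q n 0

def Bsum (q n : ℕ) : ℤ :=
  ∑ j ∈ Finset.range (n + 1),
    (-1 : ℤ) ^ j * ((n - (q-1)*j).choose j) * (n - q*j).factorial

lemma qsplit (q j : ℕ) (hq : 1 ≤ q) : (q-1)*j + j = q*j := by
  cases q with
  | zero => omega
  | succ p => simp [Nat.succ_sub_one, Nat.succ_mul]

lemma choose_zero_of (q j m : ℕ) (hq : 1 ≤ q) (hj : 1 ≤ j) (h : m < q*j) :
    (m - (q-1)*j).choose j = 0 := by
  apply Nat.choose_eq_zero_of_lt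
  have h' : m < (q-1)*j + j := by rw [qsplit q j hq]; exact h
  omega

lemma Bsum_eq_range (q m R : ℕ) (hq : 1 ≤ q) (hR : m + 1 ≤ R) :
    Bsum q m = ∑ j ∈ Finset.range R,
      (-1 : ℤ) ^ j * ((m - (q-1)*j).choose j) * (m - q*j).factorial := by
  refine Finset.sum_subset (Finset.range_subset_range.2 hR) ?_
  intro j hjR hjm
  simp only [Finset.mem_range, not_lt] at hjm
  have hj1 : 1 ≤ j := by omega
  have : m < q*j := by
    have hjq : j ≤ q*j := Nat.le_mul_of_pos_left j hq
    omega
  rw [choose_zero_of q j m hq hj1 this]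
  simp

theorem Bsum_init (q n : ℕ) (h : n < q) : Bsum q n = n.factorial := by
  rw [Bsum, Finset.sum_eq_single 0]
  · simp
  · intro j hj hj0
    have hj1 : 1 ≤ j := by omega
    have : n < q * j := lt_of_lt_of_le h (Nat.le_mul_of_pos_right q (by omega))
    rw [choose_zero_of q j n (by omega) hj1 this]
    simp
  · intro h0; simp at h0

theorem Bsum_rec (q : ℕ) (hq : 1 ≤ q) (n : ℕ) :
    Bsum q (n + q) = (n + q) * Bsum q (n + q - 1) + (q - 1) * Bsum q n
      + (if q ∣ n then q * (-1 : ℤ) ^ (n / q + 1) else 0) := by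
  set N := n + q with hN
  have hqN : q ≤ N := by omega
  have e1 : ∀ j : ℕ, N - 1 - (q-1)*(j+1) = n - (q-1)*j := by
    intro j; have h : (q-1)*(j+1) = (q-1)*j + (q-1) := by ring
    omega
  have e2 : ∀ j : ℕ, N - q*(j+1) = n - q*j := by
    intro j; have h : q*(j+1) = q*j + q := by ring
    omega
  have e3 : ∀ j : ℕ, N - 1 - q*(j+1) = n - q*j - 1 := by
    intro j; have h : q*(j+1) = q*j + q := by ring
    omega
  -- Step 1 : Pascal split
  have step1 : Bsum q N
      = (∑ j ∈ Finset.range N,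
          (-1:ℤ)^(j+1) * ((N - 1 - (q-1)*(j+1)).choose (j+1)) * (N - q*(j+1)).factorial)
        + (∑ j ∈ Finset.range N,
          (-1:ℤ)^(j+1) * ((n - (q-1)*j).choose j) * (n - q*j).factorial)
        + (N.factorial : ℤ) := by
    rw [Bsum, Finset.sum_range_succ' _ N]
    congr 1
    · rw [← Finset.sum_add_distrib]
      apply Finset.sum_congr rfl
      intro j _
      have pascal : ((N - (q-1)*(j+1)).choose (j+1))
          = (N - 1 - (q-1)*(j+1)).choose j + (N - 1 - (q-1)*(j+1)).choose (j+1) := by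
        by_cases hle : q*(j+1) ≤ N
        · have hA : (q-1)*(j+1) + (j+1) = q*(j+1) := qsplit q (j+1) hq
          have hs : N - (q-1)*(j+1) = (N - 1 - (q-1)*(j+1)) + 1 := by omega
          rw [hs]
          exact Nat.choose_succ_succ _ j
        · push_neg at hle
          rw [choose_zero_of q (j+1) N hq (by omega) hle,
            choose_zero_of q (j+1) (N-1) hq (by omega) (by omega)]
          have hj1 : 1 ≤ j := by
            by_contra hj0
            have hj : j = 0 := by omega
            subst hj
            have : q*(0+1) = q := by ring
            omega
          have hqj : q*(j+1) = q*j + q := by ring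
          rw [e1 j, choose_zero_of q j n hq hj1 (by omega)]
      rw [pascal, e1 j, e2 j]
      push_cast
      ring
    · simp
  -- the W sum
  have hW : (∑ i ∈ Finset.range (N+1),
        (-1:ℤ)^i * ((N - 1 - (q-1)*i).choose i) * (N - q*i).factorial)
      = (∑ j ∈ Finset.range N,
          (-1:ℤ)^(j+1) * ((N - 1 - (q-1)*(j+1)).choose (j+1)) * (N - q*(j+1)).factorial)
        + (N.factorial : ℤ) := by
    rw [Finset.sum_range_succ' _ N]
    congr 1
    simp
  -- W splits as N * Bsum (N-1) - q * F1
  have step2 : (∑ i ∈ Finset.range (N+1),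
        (-1:ℤ)^i * ((N - 1 - (q-1)*i).choose i) * (N - q*i).factorial)
      = (N : ℤ) * Bsum q (N-1)
        - q * (∑ i ∈ Finset.range (N+1),
            (-1:ℤ)^i * i * ((N - 1 - (q-1)*i).choose i) * (N - 1 - q*i).factorial) := by
    rw [Bsum_eq_range q (N-1) (N+1) hq (by omega), Finset.mul_sum, Finset.mul_sum,
      ← Finset.sum_sub_distrib]
    apply Finset.sum_congr rfl
    intro i _
    have hrw : ∀ j:ℕ, (N-1) - (q-1)*j = N - 1 - (q-1)*j := fun j => rfl
    by_cases hle : q*i ≤ N-1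
    · have h1 : N - q*i = (N - 1 - q*i) + 1 := by omega
      have h2 : ((N - q*i : ℕ) : ℤ) = (N : ℤ) - q*i := by
        push_cast [Nat.cast_sub (show q*i ≤ N by omega)]
        ring
      rw [h1, Nat.factorial_succ, ← h1]
      push_cast [h2]
      ring
    · have hi1 : 1 ≤ i := by
        by_contra hi0
        have hi : i = 0 := by omega
        subst hi
        have : q*0 = 0 := by ring
        omega
      rw [choose_zero_of q i (N-1) hq hi1 (by omega)]
      push_cast
      ring
  -- F1
  have step3 : (∑ i ∈ Finset.range (N+1),
        (-1:ℤ)^i * i * ((N - 1 - (q-1)*i).choose i) * (N - 1 - q*i).factorial)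
      = - Bsum q n - (if q ∣ n then (-1:ℤ)^(n/q+1) else 0) := by
    rw [Finset.sum_range_succ' _ N]
    have hzero : ((-1:ℤ)^0 * (0:ℕ) * ((N - 1 - (q-1)*0).choose 0) * (N - 1 - q*0).factorial) = 0 := by
      simp
    rw [hzero, add_zero]
    have hterm : ∀ j ∈ Finset.range N,
        (-1:ℤ)^(j+1) * ((j+1 : ℕ) : ℤ) * ((N - 1 - (q-1)*(j+1)).choose (j+1)) * (N - 1 - q*(j+1)).factorial
        = (-1:ℤ)^(j+1) * ((n - (q-1)*j).choose j) * (n - q*j).factorial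
          - (if q*j = n then (-1:ℤ)^(j+1) else 0) := by
      intro j _
      rw [e1 j, e3 j]
      have hkeyN : ((n - (q-1)*j).choose (j+1)) * (j+1)
          = ((n - (q-1)*j).choose j) * ((n - (q-1)*j) - j) :=
        Nat.choose_succ_right_eq _ j
      have hA : (q-1)*j + j = q*j := qsplit q j hq
      rcases lt_trichotomy (q*j) n with hlt | heq | hgt
      · have hsj : n - (q-1)*j - j = n - q*j := by omega
        have hprod : ((n - (q-1)*j).choose (j+1)) * (j+1) * (n - q*j - 1).factorial
            = ((n - (q-1)*j).choose j) * (n - q*j).factorial := by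
          rw [hkeyN, hsj]
          have hf : n - q*j = (n - q*j - 1) + 1 := by omega
          rw [hf, Nat.factorial_succ, ← hf]
          ring
        rw [if_neg (by omega)]
        have hcast := congrArg (Nat.cast (R := ℤ)) hprod
        push_cast at hcast ⊢
        linear_combination (-1:ℤ)^(j+1) * hcast
      · have hsj : n - (q-1)*j = j := by omega
        rw [if_pos heq, hsj, show (n - q*j) = 0 by omega]
        simp [Nat.choose_succ_self]
      · have hj1 : 1 ≤ j := by
          by_contra hj0
          have hj : j = 0 := by omega
          subst hj
          simp at hgt
        have h0 : (n - (q-1)*j).choose (j+1) = 0 := Nat.choose_eq_zero_of_lt (by omega)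
        rw [h0, choose_zero_of q j n hq hj1 hgt, if_neg (by omega)]
        simp
    rw [Finset.sum_congr rfl hterm, Finset.sum_sub_distrib]
    have hBn : (∑ j ∈ Finset.range N,
        (-1:ℤ)^(j+1) * ((n - (q-1)*j).choose j) * (n - q*j).factorial) = - Bsum q n := by
      rw [Bsum_eq_range q n N hq (by omega), ← Finset.sum_neg_distrib]
      apply Finset.sum_congr rfl
      intro j _
      rw [pow_succ]
      ring
    have hind : (∑ j ∈ Finset.range N, (if q*j = n then (-1:ℤ)^(j+1) else 0))
        = (if q ∣ n then (-1:ℤ)^(n/q+1) else 0) := by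
      by_cases hd : q ∣ n
      · obtain ⟨k, hk⟩ := hd
        rw [if_pos ⟨k, hk⟩, Finset.sum_eq_single k]
        · rw [if_pos hk.symm, hk, Nat.mul_div_cancel_left k (by omega)]
        · intro j _ hjk
          rw [if_neg]
          intro h
          exact hjk (Nat.eq_of_mul_eq_mul_left (by omega) (h.trans hk))
        · intro hk'
          exfalso
          apply hk'
          rw [Finset.mem_range]
          have : k ≤ q*k := Nat.le_mul_of_pos_left k (by omega)
          omega
      · rw [if_neg hd]
        apply Finset.sum_eq_zero
        intro j _
        rw [if_neg]
        intro h
        exact hd ⟨j, h.symm⟩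
    rw [hBn, hind]
  -- assemble
  have hV : (∑ j ∈ Finset.range N,
      (-1:ℤ)^(j+1) * ((n - (q-1)*j).choose j) * (n - q*j).factorial) = - Bsum q n := by
    rw [Bsum_eq_range q n N hq (by omega), ← Finset.sum_neg_distrib]
    apply Finset.sum_congr rfl
    intro j _
    rw [pow_succ]
    ring
  rw [step1, hV]
  have htot := hW
  rw [step2, step3] at htot
  have hNcast : (N:ℤ) = (n:ℤ) + q := by rw [hN]; push_cast; ring
  rw [hNcast] at htot
  by_cases hd : q ∣ n
  · rw [if_pos hd] at htot ⊢
    push_cast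
    linear_combination -htot
  · rw [if_neg hd] at htot ⊢
    push_cast
    linear_combination -htot

def covP (q : ℕ) (S : Finset ℕ) (i : ℕ) : Prop := ∃ a ∈ S, a ≤ i ∧ i < a + q

instance (q : ℕ) (S : Finset ℕ) (i : ℕ) : Decidable (covP q S i) := by
  unfold covP; infer_instance

def endP (q : ℕ) (S : Finset ℕ) (i : ℕ) : Prop := ∃ a ∈ S, i = a + q - 1

instance (q : ℕ) (S : Finset ℕ) (i : ℕ) : Decidable (endP q S i) := by
  unfold endP; infer_instance

def gf (q : ℕ) (S : Finset ℕ) (i : ℕ) : ℕ :=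
  if endP q S i then i + 1 - q else if covP q S i then i + 1 else i

def hf (q : ℕ) (S : Finset ℕ) (i : ℕ) : ℕ :=
  if i ∈ S then i + q - 1 else if covP q S i then i - 1 else i

def Valid (q n : ℕ) (S : Finset ℕ) : Prop :=
  (∀ a ∈ S, a + q ≤ n) ∧ ∀ a ∈ S, ∀ c ∈ S, a < c → a + q ≤ c

instance (q n : ℕ) (S : Finset ℕ) : Decidable (Valid q n S) := by
  unfold Valid; infer_instance

section main

variable {q n : ℕ} {S : Finset ℕ}

theorem cov_unique (hq : 1 ≤ q) (hV2 : ∀ a ∈ S, ∀ c ∈ S, a < c → a + q ≤ c)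
    {a c i : ℕ} (ha : a ∈ S) (hc : c ∈ S) (hai : a ≤ i ∧ i < a + q)
    (hci : c ≤ i ∧ i < c + q) : a = c := by
  rcases lt_trichotomy a c with h | h | h
  · have := hV2 a ha c hc h; omega
  · exact h
  · have := hV2 c hc a ha h; omega

theorem count_valid (hq : 1 ≤ q) (hV : Valid q n S) :
    (Finset.univ.filter fun π : Equiv.Perm (Fin n) => ∀ a ∈ S, isAdjCycle q π a).card
      = (n - q * S.card).factorial := by
  obtain ⟨hV1, hV2⟩ := hV
  -- basic facts about gf / hf
  have hend_cov : ∀ i, endP q S i → covP q S i := by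
    rintro i ⟨a, ha, rfl⟩; exact ⟨a, ha, by omega, by omega⟩
  have hmem_cov : ∀ i, i ∈ S → covP q S i := fun i hi => ⟨i, hi, by omega, by omega⟩
  have hgend : ∀ a ∈ S, gf q S (a + q - 1) = a := by
    intro a ha
    rw [gf, if_pos ⟨a, ha, rfl⟩]; omega
  have hgcov : ∀ i, covP q S i → ¬ endP q S i → gf q S i = i + 1 := by
    intro i hc he; rw [gf, if_neg he, if_pos hc]
  have hgid : ∀ i, ¬ covP q S i → gf q S i = i := by
    intro i hc; rw [gf, if_neg (fun h => hc (hend_cov i h)), if_neg hc]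
  have hnotend : ∀ a ∈ S, ∀ i, a ≤ i → i < a + q → i ≠ a + q - 1 → ¬ endP q S i := by
    rintro a ha i h1 h2 h3 ⟨c, hc, rfl⟩
    have := cov_unique hq hV2 ha hc ⟨h1, h2⟩ ⟨by omega, by omega⟩
    omega
  have hleft : ∀ i, hf q S (gf q S i) = i := by
    intro i
    by_cases he : endP q S i
    · obtain ⟨a, ha, rfl⟩ := he
      rw [hgend a ha, hf, if_pos ha]
    · by_cases hc : covP q S i
      · rw [hgcov i hc he]
        obtain ⟨a, ha, h1, h2⟩ := hc
        have hiq : i + 1 < a + q := by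
          rcases Nat.lt_or_ge (i+1) (a+q) with h | h
          · exact h
          · exfalso; exact he ⟨a, ha, by omega⟩
        have hnS : i + 1 ∉ S := by
          intro hS1
          have := hV2 a ha (i+1) hS1 (by omega)
          omega
        rw [hf, if_neg hnS, if_pos ⟨a, ha, by omega, by omega⟩]
        omega
      · rw [hgid i hc, hf, if_neg (fun h => hc (hmem_cov i h)), if_neg hc]
  have hright : ∀ i, gf q S (hf q S i) = i := by
    intro i
    by_cases hs : i ∈ S
    · rw [hf, if_pos hs, hgend i hs]
    · by_cases hc : covP q S i
      · obtain ⟨a, ha, h1, h2⟩ := hc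
        have hai : a < i := by
          rcases Nat.lt_or_ge a i with h | h
          · exact h
          · exfalso; have : a = i := by omega
            exact hs (this ▸ ha)
        rw [hf, if_neg hs, if_pos ⟨a, ha, h1, h2⟩]
        have hne : ¬ endP q S (i - 1) := by
          rintro ⟨c, hc', hieq⟩
          have := cov_unique hq hV2 ha hc' (⟨by omega, by omega⟩ : a ≤ i - 1 ∧ i - 1 < a + q)
            ⟨by omega, by omega⟩
          omega
        rw [hgcov (i-1) ⟨a, ha, by omega, by omega⟩ hne]
        omega
      · rw [hf, if_neg hs, if_neg hc, hgid i hc]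
  have hglt : ∀ i, i < n → gf q S i < n := by
    intro i hi
    by_cases he : endP q S i
    · rw [gf, if_pos he]; omega
    · by_cases hc : covP q S i
      · rw [hgcov i hc he]
        obtain ⟨a, ha, h1, h2⟩ := hc
        have := hV1 a ha
        have : i + 1 < a + q := by
          rcases Nat.lt_or_ge (i+1) (a+q) with h | h
          · exact h
          · exfalso; exact he ⟨a, ha, by omega⟩
        omega
      · rw [hgid i hc]; exact hi
  have hhlt : ∀ i, i < n → hf q S i < n := by
    intro i hi
    by_cases hs : i ∈ S
    · rw [hf, if_pos hs]
      have := hV1 i hs; omega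
    · by_cases hc : covP q S i
      · rw [hf, if_neg hs, if_pos hc]; omega
      · rw [hf, if_neg hs, if_neg hc]; exact hi
  let τ : Equiv.Perm (Fin n) :=
    ⟨fun x => ⟨gf q S x.val, hglt x.val x.isLt⟩,
     fun x => ⟨hf q S x.val, hhlt x.val x.isLt⟩,
     fun x => Fin.ext (hleft x.val),
     fun x => Fin.ext (hright x.val)⟩
  have hτval : ∀ x : Fin n, (τ x).val = gf q S x.val := fun x => rfl
  -- the condition is equivalent to agreeing with τ on covered points
  have hcond : ∀ π : Equiv.Perm (Fin n),
      (∀ a ∈ S, isAdjCycle q π a) ↔ (∀ x : Fin n, covP q S x.val → π x = τ x) := by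
    intro π
    constructor
    · rintro h x ⟨a, ha, h1, h2⟩
      obtain ⟨hb, hval⟩ := h a ha
      apply Fin.ext
      rw [hval x h1 h2, hτval]
      by_cases hx : x.val = a + q - 1
      · rw [if_pos hx, hx, hgend a ha]
      · rw [if_neg hx, hgcov x.val ⟨a, ha, h1, h2⟩ (hnotend a ha x.val h1 h2 hx)]
    · intro h a ha
      refine ⟨hV1 a ha, ?_⟩
      intro i h1 h2
      have := h i ⟨a, ha, h1, h2⟩
      rw [show (π i).val = (τ i).val from congrArg Fin.val this, hτval]
      by_cases hx : i.val = a + q - 1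
      · rw [if_pos hx, hx, hgend a ha]
      · rw [if_neg hx, hgcov i.val ⟨a, ha, h1, h2⟩ (hnotend a ha i.val h1 h2 hx)]
  -- translate the filter via multiplication by τ⁻¹
  have step1 : (Finset.univ.filter fun π : Equiv.Perm (Fin n) => ∀ a ∈ S, isAdjCycle q π a).card
      = (Finset.univ.filter fun σ : Equiv.Perm (Fin n) =>
          ∀ x : Fin n, covP q S x.val → σ x = x).card := by
    apply Finset.card_bij' (fun π _ => τ⁻¹ * π) (fun σ _ => τ * σ)
    · intro π hπ
      rw [Finset.mem_filter] at hπ ⊢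
      refine ⟨Finset.mem_univ _, ?_⟩
      intro x hx
      have := (hcond π).1 hπ.2 x hx
      simp [Equiv.Perm.mul_apply, this]
    · intro σ hσ
      rw [Finset.mem_filter] at hσ ⊢
      refine ⟨Finset.mem_univ _, ?_⟩
      apply (hcond _).2
      intro x hx
      simp [Equiv.Perm.mul_apply, hσ.2 x hx]
    · intro π _; group
    · intro σ _; group
  rw [step1]
  -- count permutations fixing the covered set
  have step2 : (Finset.univ.filter fun σ : Equiv.Perm (Fin n) =>
        ∀ x : Fin n, covP q S x.val → σ x = x).card
      = (Fintype.card {x : Fin n // ¬ covP q S x.val}).factorial := by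
    rw [← Fintype.card_perm, ← Fintype.card_subtype]
    apply Fintype.card_congr
    refine Equiv.trans (Equiv.subtypeEquivRight ?_)
      (Equiv.Perm.subtypeEquivSubtypePerm (fun x : Fin n => ¬ covP q S x.val)).symm
    intro σ
    constructor
    · intro h x hx
      exact h x (not_not.mp hx)
    · intro h x hx
      exact h x (not_not.mpr hx)
  rw [step2]
  congr 1
  -- cardinality of the uncovered set
  have hcovcard : (Finset.univ.filter fun x : Fin n => covP q S x.val).card = q * S.card := by
    have hbij : (Finset.univ.filter fun x : Fin n => covP q S x.val).card
        = ((Finset.range n).filter (covP q S)).card := by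
      apply Finset.card_bij (fun x _ => x.val)
      · intro x hx
        rw [Finset.mem_filter] at hx ⊢
        exact ⟨Finset.mem_range.2 x.isLt, hx.2⟩
      · intro x _ y _ h; exact Fin.ext h
      · intro i hi
        rw [Finset.mem_filter, Finset.mem_range] at hi
        exact ⟨⟨i, hi.1⟩, Finset.mem_filter.2 ⟨Finset.mem_univ _, hi.2⟩, rfl⟩
    rw [hbij]
    have hset : (Finset.range n).filter (covP q S) = S.biUnion (fun a => Finset.Ico a (a+q)) := by
      ext i
      simp only [Finset.mem_filter, Finset.mem_range, Finset.mem_biUnion, Finset.mem_Ico]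
      constructor
      · rintro ⟨_, a, ha, h1, h2⟩; exact ⟨a, ha, h1, h2⟩
      · rintro ⟨a, ha, h1, h2⟩
        have := hV1 a ha
        exact ⟨by omega, a, ha, h1, h2⟩
    rw [hset, Finset.card_biUnion]
    · simp only [Nat.card_Ico]
      rw [Finset.sum_congr rfl (fun a _ => show a + q - a = q by omega), Finset.sum_const,
        smul_eq_mul, mul_comm]
    · intro a ha c hc hac
      apply Finset.disjoint_left.2
      intro i hia hic
      rw [Finset.mem_Ico] at hia hic
      rcases lt_trichotomy a c with h | h | h
      · have := hV2 a ha c hc h; omega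
      · exact hac h
      · have := hV2 c hc a ha h; omega
  have := Finset.card_filter_add_card_filter_not
    (s := (Finset.univ : Finset (Fin n))) (p := fun x => covP q S x.val)
  rw [Fintype.card_subtype]
  rw [Finset.card_univ, Fintype.card_fin] at this
  omega

end main

section part2
variable {q n : ℕ} {S : Finset ℕ}

theorem count_invalid (hq : 1 ≤ q) (hV : ¬ Valid q n S) :
    (Finset.univ.filter fun π : Equiv.Perm (Fin n) => ∀ a ∈ S, isAdjCycle q π a).card = 0 := by
  rw [Finset.card_eq_zero, Finset.filter_eq_empty_iff]
  intro π _
  intro hπ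
  apply hV
  constructor
  · intro a ha; exact (hπ a ha).1
  · intro a ha c hc hac
    by_contra hlt
    push_neg at hlt
    have hbnd : a + q ≤ n := (hπ a ha).1
    have h1 := (hπ a ha).2 ⟨a+q-1, by omega⟩ (by simp; omega) (by simp; omega)
    have h2 := (hπ c hc).2 ⟨a+q-1, by omega⟩ (by simp; omega) (by simp; omega)
    simp only at h1 h2
    norm_num at h1
    rw [if_neg (by omega : ¬ (a+q-1 = c + q - 1))] at h2
    omega

theorem b_eq_ie (hq : 1 ≤ q) :
    (b q n : ℤ) = ∑ S ∈ (Finset.range n).powerset, (-1 : ℤ)^S.card *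
      ((Finset.univ.filter fun π : Equiv.Perm (Fin n) => ∀ a ∈ S, isAdjCycle q π a).card : ℤ) := by
  have h1 : (b q n : ℤ) = ∑ π : Equiv.Perm (Fin n),
      (if ((Finset.range n).filter (isAdjCycle q π)) = ∅ then (1:ℤ) else 0) := by
    rw [b, numAqC]
    have hfc : (Finset.univ.filter (fun π : Equiv.Perm (Fin n) => adjCycleCount q π = 0))
        = (Finset.univ.filter
            (fun π => ((Finset.range n).filter (isAdjCycle q π)) = ∅)) := by
      apply Finset.filter_congr
      intro π _
      simp [adjCycleCount, Finset.card_eq_zero]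
    rw [hfc, Finset.sum_boole]
  have h2 : ∀ π : Equiv.Perm (Fin n),
      (if ((Finset.range n).filter (isAdjCycle q π)) = ∅ then (1:ℤ) else 0)
      = ∑ T ∈ (Finset.range n).powerset,
          if (∀ a ∈ T, isAdjCycle q π a) then (-1:ℤ)^T.card else 0 := by
    intro π
    rw [← Finset.sum_powerset_neg_one_pow_card, ← Finset.sum_filter]
    congr 1
    ext T
    simp only [Finset.mem_powerset, Finset.mem_filter]
    constructor
    · intro h
      refine ⟨fun x hx => (Finset.mem_filter.1 (h hx)).1, fun a ha => (Finset.mem_filter.1 (h ha)).2⟩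
    · rintro ⟨hsub, hall⟩ x hx
      exact Finset.mem_filter.2 ⟨hsub hx, hall x hx⟩
  rw [h1, Finset.sum_congr rfl (fun π _ => h2 π), Finset.sum_comm]
  apply Finset.sum_congr rfl
  intro T _
  rw [← Finset.sum_filter, Finset.sum_const, nsmul_eq_mul, mul_comm]

theorem pascal_corner {j : ℕ} (hq : 1 ≤ q) (hqn : q ≤ n) (hj : 1 ≤ j) :
    (n - (q-1)*j).choose j = ((n-1) - (q-1)*j).choose j + ((n-1) - (q-1)*j).choose (j-1) := by
  obtain ⟨i, rfl⟩ : ∃ i, j = i + 1 := ⟨j-1, by omega⟩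
  have hA : (q-1)*(i+1) + (i+1) = q*(i+1) := qsplit q (i+1) hq
  simp only [Nat.add_sub_cancel]
  by_cases hle : q*(i+1) ≤ n
  · have hs : n - (q-1)*(i+1) = ((n-1) - (q-1)*(i+1)) + 1 := by omega
    rw [hs, Nat.choose_succ_succ]
    simp only [Nat.succ_eq_add_one]
    omega
  · push_neg at hle
    have hi1 : 1 ≤ i := by
      by_contra h
      have hi : i = 0 := by omega
      subst hi
      omega
    rw [choose_zero_of q (i+1) n hq (by omega) hle,
      choose_zero_of q (i+1) (n-1) hq (by omega) (by omega),
      Nat.choose_eq_zero_of_lt (by omega)]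

theorem card_valid_sets (q : ℕ) (hq : 1 ≤ q) : ∀ n j : ℕ,
    ((Finset.range n).powerset.filter (fun S => Valid q n S ∧ S.card = j)).card
      = (n - (q-1)*j).choose j := by
  intro n
  induction n using Nat.strong_induction_on with
  | _ n IH =>
  intro j
  rcases Nat.eq_zero_or_pos j with hj0 | hj1
  · subst hj0
    rw [show ((Finset.range n).powerset.filter (fun S => Valid q n S ∧ S.card = 0)) = {∅} from ?_]
    · simp
    · ext S
      simp only [Finset.mem_filter, Finset.mem_powerset, Finset.mem_singleton, Finset.card_eq_zero]
      constructor
      · rintro ⟨_, _, h⟩; exact h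
      · rintro rfl
        exact ⟨Finset.empty_subset _, ⟨fun a ha => absurd ha (Finset.notMem_empty a),
          fun a ha => absurd ha (Finset.notMem_empty a)⟩, rfl⟩
  rcases Nat.lt_or_ge n q with hn | hn
  · -- n < q : no valid nonempty sets
    rw [show ((Finset.range n).powerset.filter (fun S => Valid q n S ∧ S.card = j)) = ∅ from ?_]
    · rw [Finset.card_empty, choose_zero_of q j n hq hj1
        (lt_of_lt_of_le hn (Nat.le_mul_of_pos_right q hj1))]
    · rw [Finset.filter_eq_empty_iff]
      rintro S _ ⟨⟨hV1, _⟩, hcard⟩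
      obtain ⟨a, ha⟩ := Finset.card_pos.1 (hcard ▸ hj1)
      have := hV1 a ha
      omega
  · -- n ≥ q, j ≥ 1 : recurrence
    have hsplit := Finset.card_filter_add_card_filter_not
      (s := (Finset.range n).powerset.filter (fun S => Valid q n S ∧ S.card = j))
      (p := fun S => (n - q) ∈ S)
    simp only [Finset.filter_filter] at hsplit
    have hB : ((Finset.range n).powerset.filter
          (fun S => (Valid q n S ∧ S.card = j) ∧ ¬ (n - q) ∈ S))
        = ((Finset.range (n-1)).powerset.filter (fun S => Valid q (n-1) S ∧ S.card = j)) := by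
      ext S
      simp only [Finset.mem_filter, Finset.mem_powerset]
      constructor
      · rintro ⟨hsub, ⟨⟨hV1, hV2⟩, hcard⟩, hnq⟩
        refine ⟨?_, ⟨?_, hV2⟩, hcard⟩
        · intro x hx
          have h1 := hV1 x hx
          have : x ≠ n - q := fun h => hnq (h ▸ hx)
          rw [Finset.mem_range]
          omega
        · intro a ha
          have h1 := hV1 a ha
          have : a ≠ n - q := fun h => hnq (h ▸ ha)
          omega
      · rintro ⟨hsub, ⟨hV1, hV2⟩, hcard⟩
        have hnotin : (n - q) ∉ S := by
          intro h
          have := hV1 _ h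
          omega
        refine ⟨fun x hx => ?_, ⟨⟨fun a ha => by have := hV1 a ha; omega, hV2⟩, hcard⟩, hnotin⟩
        have := Finset.mem_range.1 (hsub hx)
        rw [Finset.mem_range]
        omega
    have hAcard : ((Finset.range n).powerset.filter
          (fun S => (Valid q n S ∧ S.card = j) ∧ (n - q) ∈ S)).card
        = ((Finset.range (n-q)).powerset.filter
            (fun S => Valid q (n-q) S ∧ S.card = j - 1)).card := by
      refine Finset.card_bij' (fun S _ => S.erase (n-q)) (fun T _ => insert (n-q) T)
        ?hi ?hj ?li ?ri
      case hi =>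
        intro S hS
        rw [Finset.mem_filter, Finset.mem_powerset] at hS ⊢
        obtain ⟨hsub, ⟨⟨hV1, hV2⟩, hcard⟩, hmem⟩ := hS
        have hlt : ∀ x ∈ S, x ≠ n - q → x < n - q := by
          intro x hx hne
          have h1 := hV1 x hx
          rcases Nat.lt_or_ge x (n-q) with h | h
          · exact h
          · exfalso
            have hxlt : n - q < x := by omega
            have := hV2 (n-q) hmem x hx hxlt
            omega
        refine ⟨?_, ⟨?_, ?_⟩, ?_⟩
        · intro x hx
          obtain ⟨hne, hxS⟩ := Finset.mem_erase.1 hx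
          rw [Finset.mem_range]
          exact hlt x hxS hne
        · intro a ha
          obtain ⟨hne, haS⟩ := Finset.mem_erase.1 ha
          exact hV2 a haS (n-q) hmem (hlt a haS hne)
        · intro a ha c hc hac
          exact hV2 a (Finset.mem_erase.1 ha).2 c (Finset.mem_erase.1 hc).2 hac
        · rw [Finset.card_erase_of_mem hmem, hcard]
      case hj =>
        intro T hT
        rw [Finset.mem_filter, Finset.mem_powerset] at hT ⊢
        obtain ⟨hsub, ⟨hV1, hV2⟩, hcard⟩ := hT
        have hnotin : (n - q) ∉ T := by
          intro h
          have := hV1 _ h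
          omega
        refine ⟨?_, ⟨⟨?_, ?_⟩, ?_⟩, Finset.mem_insert_self _ _⟩
        · intro x hx
          rcases Finset.mem_insert.1 hx with rfl | hxT
          · rw [Finset.mem_range]; omega
          · have := Finset.mem_range.1 (hsub hxT)
            rw [Finset.mem_range]; omega
        · intro a ha
          rcases Finset.mem_insert.1 ha with rfl | haT
          · omega
          · have := hV1 a haT; omega
        · intro a ha c hc hac
          rcases Finset.mem_insert.1 ha with rfl | haT
          · rcases Finset.mem_insert.1 hc with rfl | hcT
            · omega
            · exfalso
              have := hV1 c hcT
              omega
          · rcases Finset.mem_insert.1 hc with rfl | hcT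
            · have := hV1 a haT; omega
            · exact hV2 a haT c hcT hac
        · rw [Finset.card_insert_of_notMem hnotin, hcard]
          omega
      case li =>
        intro S hS
        exact Finset.insert_erase (Finset.mem_filter.1 hS).2.2
      case ri =>
        intro T hT
        apply Finset.erase_insert
        intro h
        have := (Finset.mem_filter.1 hT).2.1.1 _ h
        omega
    have h1 := IH (n-1) (by omega) j
    have h2 := IH (n-q) (by omega) (j-1)
    have hrw : (n-q) - (q-1)*(j-1) = (n-1) - (q-1)*j := by
      have e : (q-1)*(j-1+1) = (q-1)*(j-1) + (q-1) := by ring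
      have ej : j - 1 + 1 = j := by omega
      rw [ej] at e
      omega
    rw [hrw] at h2
    rw [pascal_corner hq hn hj1, ← h1, ← h2, ← hsplit, hB, ← hAcard]
    omega

theorem b_eq_Bsum (q : ℕ) (hq : 1 ≤ q) (n : ℕ) : (b q n : ℤ) = Bsum q n := by
  rw [b_eq_ie hq, Bsum]
  have hterm : ∀ S ∈ (Finset.range n).powerset,
      (-1 : ℤ)^S.card *
        ((Finset.univ.filter fun π : Equiv.Perm (Fin n) => ∀ a ∈ S, isAdjCycle q π a).card : ℤ)
      = if Valid q n S then (-1 : ℤ)^S.card * (n - q * S.card).factorial else 0 := by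
    intro S _
    by_cases hV : Valid q n S
    · rw [if_pos hV, count_valid hq hV]
    · rw [if_neg hV, count_invalid hq hV]
      simp
  rw [Finset.sum_congr rfl hterm, ← Finset.sum_filter]
  rw [← Finset.sum_fiberwise_of_maps_to (g := Finset.card) (t := Finset.range (n+1)) ?_]
  · apply Finset.sum_congr rfl
    intro j _
    have : ∀ S ∈ ((Finset.range n).powerset.filter (fun S => Valid q n S)).filter
        (fun S => S.card = j),
        (-1 : ℤ)^S.card * ((n - q * S.card).factorial : ℤ)
          = (-1 : ℤ)^j * ((n - q * j).factorial : ℤ) := by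
      intro S hS
      rw [(Finset.mem_filter.1 hS).2]
    rw [Finset.sum_congr rfl this, Finset.sum_const, nsmul_eq_mul, Finset.filter_filter,
      card_valid_sets q hq n j]
    push_cast
    ring
  · intro S hS
    rw [Finset.mem_filter, Finset.mem_powerset] at hS
    rw [Finset.mem_range]
    have := Finset.card_le_card hS.1
    rw [Finset.card_range] at this
    omega

end part2


theorem coeff_iterate_derivative (f : PowerSeries ℚ) (k n : ℕ) :
    PowerSeries.coeff (R := ℚ) n ((⇑(PowerSeries.derivative ℚ))^[k] f)
      = PowerSeries.coeff (R := ℚ) (n + k) f * ((n+k).factorial / n.factorial : ℚ) := by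
  induction k generalizing n with
  | zero =>
    have h : (n.factorial : ℚ) ≠ 0 := by positivity
    simp [div_self h]
  | succ k ih =>
    rw [Function.iterate_succ_apply', PowerSeries.coeff_derivative, ih]
    have h : ((n+1).factorial : ℚ) = (n+1) * n.factorial := by
      exact_mod_cast Nat.factorial_succ n
    have h2 : n + (k+1) = n + 1 + k := by ring
    have h3 : (n.factorial : ℚ) ≠ 0 := by positivity
    have h4 : ((n+1+k).factorial : ℚ) ≠ 0 := by positivity
    rw [h2, h]
    field_simp


open PowerSeries in
theorem stmt12 (q : ℕ) (hq : 1 ≤ q) :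
    letI G : PowerSeries ℚ := PowerSeries.mk fun n => (b q n : ℚ) / (n.factorial : ℚ)
    letI w : PowerSeries ℚ :=
      PowerSeries.mk fun n => if n ≠ 0 ∧ q ∣ n then (-1 : ℚ) ^ (n / q) / (n.factorial : ℚ) else 0
    ((1 - X) * ((⇑(PowerSeries.derivative ℚ))^[q] G) -
        (q : PowerSeries ℚ) * ((⇑(PowerSeries.derivative ℚ))^[q - 1] G) -
        ((q : PowerSeries ℚ) - 1) * G =
      (q : PowerSeries ℚ) * ((⇑(PowerSeries.derivative ℚ))^[q] w)) ∧
    ∀ i < q, PowerSeries.coeff (R := ℚ) 0 ((⇑(PowerSeries.derivative ℚ))^[i] G) = (i.factorial : ℚ) := by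
  have hGk : ∀ k n : ℕ, PowerSeries.coeff (R := ℚ) n ((⇑(PowerSeries.derivative ℚ))^[k] (PowerSeries.mk fun n => (b q n : ℚ) / (n.factorial : ℚ)))
      = (b q (n+k) : ℚ) / n.factorial := by
    intro k n
    rw [coeff_iterate_derivative, PowerSeries.coeff_mk]
    have h1 : ((n+k).factorial : ℚ) ≠ 0 := by positivity
    field_simp
  have hwk : ∀ n : ℕ, PowerSeries.coeff (R := ℚ) n ((⇑(PowerSeries.derivative ℚ))^[q]
      (PowerSeries.mk fun n => if n ≠ 0 ∧ q ∣ n then (-1 : ℚ) ^ (n / q) / (n.factorial : ℚ) else 0))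
      = if q ∣ n then (-1 : ℚ) ^ (n/q+1) / n.factorial else 0 := by
    intro n
    rw [coeff_iterate_derivative, PowerSeries.coeff_mk]
    have hne : n + q ≠ 0 := by omega
    have hdvd : (q ∣ n + q) ↔ q ∣ n := by
      rw [Nat.add_comm]; exact Nat.dvd_add_right (dvd_refl q)
    by_cases hd : q ∣ n
    · have h3 : (n + q) / q = n / q + 1 := Nat.add_div_right n hq
      have h1 : ((n+q).factorial : ℚ) ≠ 0 := by positivity
      have h2 : (n.factorial : ℚ) ≠ 0 := by positivity
      simp only [if_pos hd, if_pos (show n + q ≠ 0 ∧ q ∣ n + q from ⟨hne, hdvd.2 hd⟩), h3]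
      field_simp
    · simp only [if_neg hd,
        if_neg (show ¬(n + q ≠ 0 ∧ q ∣ n + q) from fun h => hd (hdvd.1 h.2)), zero_mul]
  have hrecQ : ∀ m : ℕ, (b q (m+q) : ℚ) = (m+q) * b q (m+q-1) + ((q:ℚ)-1) * b q m
      + (if q ∣ m then q * (-1:ℚ)^(m/q+1) else 0) := by
    intro m
    have h := Bsum_rec q hq m
    rw [← b_eq_Bsum q hq, ← b_eq_Bsum q hq, ← b_eq_Bsum q hq] at h
    by_cases hd : q ∣ m
    · rw [if_pos hd] at h ⊢; exact_mod_cast h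
    · rw [if_neg hd] at h ⊢; exact_mod_cast h
  constructor
  · ext n
    have hC : ∀ (f : PowerSeries ℚ) (m : ℕ), PowerSeries.coeff (R := ℚ) m ((q : PowerSeries ℚ) * f)
        = q * PowerSeries.coeff (R := ℚ) m f := by
      intro f m; rw [← map_natCast (PowerSeries.C (R := ℚ)) q, PowerSeries.coeff_C_mul]
    rw [map_sub, map_sub, sub_mul, one_mul, map_sub, sub_mul, one_mul, map_sub, hC, hC, hC,
      hGk, hGk, hwk, PowerSeries.coeff_mk]
    have hq1 : n + (q - 1) = n + q - 1 := by omega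
    rw [hq1]
    cases n with
    | zero =>
      rw [PowerSeries.coeff_zero_X_mul]
      have h := hrecQ 0
      rw [if_pos (dvd_zero q)] at h ⊢
      simp only [Nat.zero_add, Nat.factorial_zero, Nat.cast_one, div_one, Nat.cast_zero,
        zero_add] at h ⊢
      linarith [h]
    | succ m =>
      rw [PowerSeries.coeff_succ_X_mul, hGk]
      have h := hrecQ (m+1)
      have he : m + 1 + q - 1 = m + q := by omega
      rw [he] at h ⊢
      have hfact : ((m+1).factorial : ℚ) = (m+1) * m.factorial := by
        exact_mod_cast Nat.factorial_succ m
      have hM : ((m+1).factorial : ℚ) ≠ 0 := by positivity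
      have hexp : (b q (m+q) : ℚ) / m.factorial = (((m:ℚ)+1) * b q (m+q)) / (m+1).factorial := by
        rw [hfact]
        exact (mul_div_mul_left _ _ (by positivity)).symm
      rw [hexp]
      push_cast at h ⊢
      by_cases hd : q ∣ (m+1)
      · rw [if_pos hd] at h ⊢
        field_simp
        linear_combination h
      · rw [if_neg hd] at h ⊢
        field_simp
        linear_combination h
  · intro i hi
    rw [hGk i 0]
    have : b q i = i.factorial := by
      have := b_eq_Bsum q hq i
      rw [Bsum_init q i hi] at this
      exact_mod_cast this
    simp [this]
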